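/- In a symplectic vector space, for a Euclidean decomposition {U, V} matching a polar decomposition, if B∩U and B∩V are 'polars' of each other in the sense that B∩U = {x ∈ U : |⟨x,y⟩| ≤ 1 for all y ∈ B∩V} and B∩V = {y ∈ V : |⟨x,y⟩| ≤ 1 for all x ∈ B∩U}, then the antinorm equals the norm: ||x||_a = ||x|| for all x. -/

import Mathlib

/-- The antinorm: `‖x‖ₐ = sup {⟨y,x⟩ : ‖y‖ = 1}`. -/
noncomputable def antinorm {X : Type*} [NormedAddCommGroup X] [NormedSpace ℝ X]
    (ω : X →ₗ[ℝ] X →ₗ[ℝ] ℝ) (x : X) : ℝ :=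
  sSup {r : ℝ | ∃ y : X, ‖y‖ = 1 ∧ r = ω y x}

lemma trigbd (c1 s1 c2 s2 a b : ℝ) (h1 : s1^2 + c1^2 = 1) (h2 : s2^2 + c2^2 = 1)
    (ha : |a| ≤ 1) (hb : |b| ≤ 1) : c1*s2*a + s1*c2*b ≤ 1 := by
  have h3 : c1*s2*a ≤ |c1*s2| := by
    calc c1*s2*a ≤ |c1*s2*a| := le_abs_self _
    _ = |c1*s2| * |a| := by rw [abs_mul]
    _ ≤ |c1*s2| * 1 := by nlinarith [abs_nonneg (c1*s2)]
    _ = |c1*s2| := mul_one _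
  have h4 : s1*c2*b ≤ |s1*c2| := by
    calc s1*c2*b ≤ |s1*c2*b| := le_abs_self _
    _ = |s1*c2| * |b| := by rw [abs_mul]
    _ ≤ |s1*c2| * 1 := by nlinarith [abs_nonneg (s1*c2)]
    _ = |s1*c2| := mul_one _
  have hsq : (|c1*s2| + |s1*c2|)^2 ≤ 1 := by
    have e1 : |c1*s2| * |s1*c2| = |c1*c2| * |s1*s2| := by
      rw [← abs_mul, ← abs_mul]; ring_nf
    nlinarith [sq_nonneg (|c1*c2| - |s1*s2|), sq_abs (c1*s2), sq_abs (s1*c2), sq_abs (c1*c2), sq_abs (s1*s2)]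
  have key : |c1*s2| + |s1*c2| ≤ 1 := by
    nlinarith [abs_nonneg (c1*s2), abs_nonneg (s1*c2)]
  linarith

lemma span_vanish {X : Type*} [NormedAddCommGroup X] [NormedSpace ℝ X]
    (ω : X →ₗ[ℝ] X →ₗ[ℝ] ℝ) (S : Set X) (h : ∀ a ∈ S, ∀ b ∈ S, ω a b = 0) :
    ∀ x ∈ Submodule.span ℝ S, ∀ y ∈ Submodule.span ℝ S, ω x y = 0 := by
  have h1 : ∀ a ∈ S, ∀ y ∈ Submodule.span ℝ S, ω a y = 0 := by
    intro a ha y hy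
    induction hy using Submodule.span_induction with
    | mem b hb => exact h a ha b hb
    | zero => simp
    | add b c _ _ ihb ihc => simp [ihb, ihc]
    | smul r b _ ih => simp [ih]
  intro x hx y hy
  induction hx using Submodule.span_induction with
  | mem a ha => exact h1 a ha y hy
  | zero => simp
  | add b c _ _ ihb ihc => simp [ihb, ihc]
  | smul r b _ ih => simp [ih]

lemma attain {X : Type*} [NormedAddCommGroup X] [NormedSpace ℝ X] [FiniteDimensional ℝ X]
    (B : X →ₗ[ℝ] X →ₗ[ℝ] ℝ) (P : Submodule ℝ X) (w : X) (hw : ‖w‖ = 1)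
    (hb : ∀ x ∈ P, ‖x‖ ≤ 1 → |B x w| ≤ 1)
    (hpol : ∀ t : ℝ, 0 < t → (∀ x ∈ P, ‖x‖ ≤ 1 → |B x (t • w)| ≤ 1) → ‖t • w‖ ≤ 1) :
    ∃ u ∈ P, ‖u‖ = 1 ∧ B u w = 1 := by
  classical
  set K : Set X := {x | x ∈ P ∧ ‖x‖ ≤ 1} with hK
  have hKeq : K = (P : Set X) ∩ Metric.closedBall 0 1 := by
    ext z; simp [hK, Metric.mem_closedBall, dist_zero_right]
  have hPc : IsClosed (P : Set X) := Submodule.closed_of_finiteDimensional P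
  have hKc : IsCompact K := by
    rw [hKeq]
    exact (isCompact_closedBall (0:X) 1).inter_left hPc
  have h0K : (0:X) ∈ K := ⟨P.zero_mem, by simp⟩
  have hfc : Continuous fun x : X => B x w := by
    have := (B.flip w).continuous_of_finiteDimensional
    exact this
  obtain ⟨u₀, hu₀K, hmax⟩ := hKc.exists_isMaxOn ⟨0, h0K⟩ hfc.continuousOn
  set M := B u₀ w with hM
  have hM0 : 0 ≤ M := by
    have := hmax h0K; simpa using this
  have habs : ∀ x ∈ K, |B x w| ≤ M := by
    intro x hx
    have h1 : B x w ≤ M := hmax hx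
    have hnx : -x ∈ K := ⟨P.neg_mem hx.1, by simpa using hx.2⟩
    have h2 : B (-x) w ≤ M := hmax hnx
    simp only [map_neg, LinearMap.neg_apply] at h2
    rw [abs_le]; exact ⟨by linarith, h1⟩
  have hMle : M ≤ 1 := (abs_le.mp (hb u₀ hu₀K.1 hu₀K.2)).2
  have hMpos : 0 < M := by
    rcases lt_or_eq_of_le hM0 with h | h
    · exact h
    · exfalso
      have hp := hpol 2 (by norm_num) ?_
      · rw [norm_smul, hw] at hp; norm_num at hp
      · intro x hxP hxn
        have h3 : |B x w| ≤ M := habs x ⟨hxP, hxn⟩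
        rw [← h] at h3
        have hz : B x w = 0 := abs_eq_zero.mp (le_antisymm h3 (abs_nonneg _))
        simp [hz]
  have hMge : 1 ≤ M := by
    have hp := hpol M⁻¹ (by positivity) ?_
    · rw [norm_smul, hw, mul_one, Real.norm_eq_abs, abs_of_pos (by positivity)] at hp
      nlinarith [inv_mul_cancel₀ (ne_of_gt hMpos)]
    · intro x hxP hxn
      have h3 : |B x w| ≤ M := habs x ⟨hxP, hxn⟩
      rw [map_smul, smul_eq_mul, abs_mul, abs_of_pos (by positivity : (0:ℝ) < M⁻¹)]
      calc M⁻¹ * |B x w| ≤ M⁻¹ * M := by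
            exact mul_le_mul_of_nonneg_left h3 (by positivity)
        _ = 1 := inv_mul_cancel₀ (ne_of_gt hMpos)
  have hMeq : M = 1 := le_antisymm hMle hMge
  have hu0 : u₀ ≠ 0 := by
    intro h; rw [h] at hM; simp at hM; rw [hM] at hMeq; norm_num at hMeq
  have hnorm : ‖u₀‖ = 1 := by
    rcases lt_or_eq_of_le hu₀K.2 with h | h
    · exfalso
      have hnp : 0 < ‖u₀‖ := norm_pos_iff.mpr hu0
      have hxK : (‖u₀‖⁻¹ • u₀) ∈ K := by
        refine ⟨P.smul_mem _ hu₀K.1, ?_⟩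
        rw [norm_smul, Real.norm_eq_abs, abs_of_pos (by positivity)]
        rw [inv_mul_cancel₀ (ne_of_gt hnp)]
      have h1 : B (‖u₀‖⁻¹ • u₀) w ≤ M := hmax hxK
      rw [map_smul, LinearMap.smul_apply, smul_eq_mul, ← hM, hMeq, mul_one] at h1
      have : (1:ℝ) < ‖u₀‖⁻¹ := by
        rw [← inv_one]
        exact inv_strictAnti₀ hnp h
      linarith
    · exact h
  exact ⟨u₀, hu₀K.1, hnorm, hMeq⟩

/-- Let `{U, V}` be a Euclidean decomposition of the norm matching a
polar decomposition `e` of the symplectic form `ω`. If `B ∩ U` and `B ∩ V` are polars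
of each other with respect to `ω`, then the antinorm equals the norm. -/
theorem stmt14 {X : Type*} [NormedAddCommGroup X] [NormedSpace ℝ X]
    [FiniteDimensional ℝ X]
    (n : ℕ) (hn : 0 < n)
    (e : Module.Basis (Fin n ⊕ Fin n) ℝ X)
    (ω : X →ₗ[ℝ] X →ₗ[ℝ] ℝ)
    (hskew : ∀ x y : X, ω x y = - ω y x)
    (hUU : ∀ i j : Fin n, ω (e (Sum.inl i)) (e (Sum.inl j)) = 0)
    (hVV : ∀ i j : Fin n, ω (e (Sum.inr i)) (e (Sum.inr j)) = 0)
    (hUV : ∀ i j : Fin n, ω (e (Sum.inl i)) (e (Sum.inr j)) = if i = j then 1 else 0)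
    (U V : Submodule ℝ X)
    (hU : U = Submodule.span ℝ (Set.range fun i : Fin n => e (Sum.inl i)))
    (hV : V = Submodule.span ℝ (Set.range fun i : Fin n => e (Sum.inr i)))
    -- `{U, V}` is a Euclidean decomposition of the norm:
    (hdecomp : {x : X | ‖x‖ = 1} =
      {x : X | ∃ u ∈ U, ∃ v ∈ V, ∃ φ : ℝ, ‖u‖ = 1 ∧ ‖v‖ = 1 ∧
        x = Real.cos φ • u + Real.sin φ • v})
    -- `B ∩ U` and `B ∩ V` are polars of each other:
    (hpolU : {x : X | x ∈ U ∧ ‖x‖ ≤ 1} =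
      {x : X | x ∈ U ∧ ∀ y : X, y ∈ V → ‖y‖ ≤ 1 → |ω x y| ≤ 1})
    (hpolV : {y : X | y ∈ V ∧ ‖y‖ ≤ 1} =
      {y : X | y ∈ V ∧ ∀ x : X, x ∈ U → ‖x‖ ≤ 1 → |ω x y| ≤ 1}) :
    ∀ x : X, antinorm ω x = ‖x‖ := by
  -- bilinear form vanishes on U×U and V×V
  have hUU' : ∀ a ∈ U, ∀ b ∈ U, ω a b = 0 := by
    rw [hU]
    apply span_vanish
    rintro a ⟨i, rfl⟩ b ⟨j, rfl⟩
    exact hUU i j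
  have hVV' : ∀ a ∈ V, ∀ b ∈ V, ω a b = 0 := by
    rw [hV]
    apply span_vanish
    rintro a ⟨i, rfl⟩ b ⟨j, rfl⟩
    exact hVV i j
  -- polar bound
  have hbUV : ∀ a ∈ U, ‖a‖ ≤ 1 → ∀ b ∈ V, ‖b‖ ≤ 1 → |ω a b| ≤ 1 := by
    intro a haU han b hbV hbn
    have h : a ∈ {x : X | x ∈ U ∧ ‖x‖ ≤ 1} := ⟨haU, han⟩
    rw [hpolU] at h
    exact h.2 b hbV hbn
  -- decompositions
  have hdec1 : ∀ y : X, ‖y‖ = 1 → ∃ u ∈ U, ∃ v ∈ V, ∃ φ : ℝ, ‖u‖ = 1 ∧ ‖v‖ = 1 ∧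
      y = Real.cos φ • u + Real.sin φ • v := by
    intro y hy
    exact (Set.ext_iff.mp hdecomp y).mp hy
  have hdec2 : ∀ (u v : X) (φ : ℝ), u ∈ U → v ∈ V → ‖u‖ = 1 → ‖v‖ = 1 →
      ‖Real.cos φ • u + Real.sin φ • v‖ = 1 := by
    intro u v φ hu hv h1 h2
    exact (Set.ext_iff.mp hdecomp _).mpr ⟨u, hu, v, hv, φ, h1, h2, rfl⟩
  -- expansion
  have expand : ∀ (α β γ δ : ℝ) (a b a' b' : X), a ∈ U → b ∈ V → a' ∈ U → b' ∈ V →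
      ω (α • a + β • b) (γ • a' + δ • b') = α * δ * (ω a b') + β * γ * (ω b a') := by
    intro α β γ δ a b a' b' ha hb ha' hb'
    simp only [map_add, map_smul, LinearMap.add_apply, LinearMap.smul_apply, smul_eq_mul]
    rw [hUU' a ha a' ha', hVV' b hb b' hb']
    ring
  intro x
  rcases eq_or_ne x 0 with rfl | hx0
  · -- zero case
    have hb0 : e (Sum.inl ⟨0, hn⟩) ≠ 0 := e.ne_zero _
    have hnb : (0:ℝ) < ‖e (Sum.inl ⟨0, hn⟩)‖ := norm_pos_iff.mpr hb0
    have hex : ∃ y : X, ‖y‖ = 1 := by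
      refine ⟨‖e (Sum.inl ⟨0, hn⟩)‖⁻¹ • e (Sum.inl ⟨0, hn⟩), ?_⟩
      rw [norm_smul, Real.norm_eq_abs, abs_of_pos (by positivity),
        inv_mul_cancel₀ (ne_of_gt hnb)]
    have hset : {r : ℝ | ∃ y : X, ‖y‖ = 1 ∧ r = ω y 0} = {0} := by
      ext r
      simp only [Set.mem_setOf_eq, Set.mem_singleton_iff, map_zero]
      constructor
      · rintro ⟨y, _, rfl⟩; rfl
      · rintro rfl; obtain ⟨y, hy⟩ := hex; exact ⟨y, hy, rfl⟩
    rw [antinorm, hset, csSup_singleton, norm_zero]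
  · -- nonzero case
    set c := ‖x‖ with hc
    have hcpos : 0 < c := norm_pos_iff.mpr hx0
    set xh := c⁻¹ • x with hxh
    have hxhn : ‖xh‖ = 1 := by
      rw [hxh, norm_smul, Real.norm_eq_abs, abs_of_pos (by positivity), ← hc,
        inv_mul_cancel₀ (ne_of_gt hcpos)]
    have hxeq : x = c • xh := by
      rw [hxh, smul_smul, mul_inv_cancel₀ (ne_of_gt hcpos), one_smul]
    obtain ⟨u', hu'U, v', hv'V, ψ, hu'n, hv'n, hxhd⟩ := hdec1 xh hxhn
    have hxd : x = (c * Real.cos ψ) • u' + (c * Real.sin ψ) • v' := by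
      rw [hxeq, hxhd, smul_add, smul_smul, smul_smul]
    -- upper bound on the set
    have hub : ∀ r ∈ {r : ℝ | ∃ y : X, ‖y‖ = 1 ∧ r = ω y x}, r ≤ c := by
      rintro r ⟨y, hy, rfl⟩
      obtain ⟨u, huU, v, hvV, φ, hun, hvn, hyd⟩ := hdec1 y hy
      have hexp : ω y x = c * (Real.cos φ * Real.sin ψ * (ω u v')
          + Real.sin φ * Real.cos ψ * (ω v u')) := by
        rw [hyd, hxd, expand _ _ _ _ u v u' v' huU hvV hu'U hv'V]
        ring
      have ha : |ω u v'| ≤ 1 := hbUV u huU hun.le v' hv'V hv'n.le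
      have hbb : |ω v u'| ≤ 1 := by
        rw [hskew v u', abs_neg]
        exact hbUV u' hu'U hu'n.le v hvV hvn.le
      have := trigbd (Real.cos φ) (Real.sin φ) (Real.cos ψ) (Real.sin ψ)
        (ω u v') (ω v u') (Real.sin_sq_add_cos_sq φ) (Real.sin_sq_add_cos_sq ψ) ha hbb
      rw [hexp]
      nlinarith
    -- attainment
    obtain ⟨u, huU, hun, huv'⟩ := attain ω U v' hv'n
      (fun a haU han => hbUV a haU han v' hv'V hv'n.le)
      (by
        intro t ht hbd
        have h : (t • v') ∈ {y : X | y ∈ V ∧ ∀ x : X, x ∈ U → ‖x‖ ≤ 1 → |ω x y| ≤ 1} :=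
          ⟨V.smul_mem _ hv'V, fun a haU han => hbd a haU han⟩
        rw [← hpolV] at h
        exact h.2)
    obtain ⟨v, hvV, hvn, hu'v⟩ := attain ω.flip V u' hu'n
      (by
        intro b hbV hbn
        simp only [LinearMap.flip_apply]
        exact hbUV u' hu'U hu'n.le b hbV hbn)
      (by
        intro t ht hbd
        have h : (t • u') ∈ {x : X | x ∈ U ∧ ∀ y : X, y ∈ V → ‖y‖ ≤ 1 → |ω x y| ≤ 1} := by
          refine ⟨U.smul_mem _ hu'U, fun b hbV hbn => ?_⟩
          have := hbd b hbV hbn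
          simpa using this
        rw [← hpolU] at h
        exact h.2)
    simp only [LinearMap.flip_apply] at hu'v
    -- the maximizing vector
    set φ₀ := ψ - Real.pi / 2 with hφ₀
    set y₀ := Real.cos φ₀ • u + Real.sin φ₀ • v with hy₀
    have hy₀n : ‖y₀‖ = 1 := hdec2 u v φ₀ huU hvV hun hvn
    have hωy₀ : ω y₀ x = c := by
      rw [hy₀, hxd, expand _ _ _ _ u v u' v' huU hvV hu'U hv'V, huv']
      have hvu' : ω v u' = -1 := by rw [hskew v u', hu'v]
      rw [hvu']
      have : Real.sin ψ * Real.cos φ₀ - Real.cos ψ * Real.sin φ₀ = 1 := by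
        rw [← Real.sin_sub, hφ₀]
        norm_num
      nlinarith
    have hmem : c ∈ {r : ℝ | ∃ y : X, ‖y‖ = 1 ∧ r = ω y x} := ⟨y₀, hy₀n, hωy₀.symm⟩
    rw [antinorm]
    exact le_antisymm (csSup_le ⟨c, hmem⟩ hub) (le_csSup ⟨c, hub⟩ hmem)
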